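/- Let N ≥ 1, weights r̂_i > 0 and define the weighted inner product (X,Y)_d = ∑_{i=1}^N X_i·Y_i r̂_i on (ℝ²)^N. Suppose B-related vector b, constraint vectors l, a ∈ (ℝ²)^N, tangential term u ∈ (ℝ²)^N, and λ, μ, γ satisfy the three equations (l, -b + λl + μa + u + γb)_d = 0, (a, -b + λl + μa + u + γb)_d = 0, and (b, -b + λl + μa + u + γb)_d + D = 0 where D = det(Gram_d(b,l,a))/det(Gram_d(l,a)). If X^{(n+1)} - X^{(n)} = Δt(-b + λl + μa + u + γb), and the discrete energies satisfy L^{(n+1)} - L^{(n)} = (l, X^{(n+1)} - X^{(n)})_d, A^{(n+1)} - A^{(n)} = (a, X^{(n+1)} - X^{(n)})_d, B^{(n+1)} - B^{(n)} = (b, X^{(n+1)} - X^{(n)})_d, then L^{(n+1)} = L^{(n)}, A^{(n+1)} = A^{(n)}, and B^{(n+1)} - B^{(n)} = -Δt·D ≤ 0 provided l, a are linearly independent with respect to (·,·)_d. -/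

import Mathlib

/-- Weighted discrete inner product `(X,Y)_d = ∑ i, X_i · Y_i * r̂_i` on `(ℝ²)^N`. -/
def wdot {N : ℕ} (r : Fin N → ℝ) (X Y : Fin N → ℝ × ℝ) : ℝ :=
  ∑ i, ((X i).1 * (Y i).1 + (X i).2 * (Y i).2) * r i

lemma hel_wdot_smul_right {N : ℕ} (r : Fin N → ℝ) (c : ℝ) (X Y : Fin N → ℝ × ℝ) :
    wdot r X (c • Y) = c * wdot r X Y := by
  unfold wdot
  rw [Finset.mul_sum]
  refine Finset.sum_congr rfl fun i _ => ?_
  simp only [Pi.smul_apply, Prod.smul_fst, Prod.smul_snd, smul_eq_mul]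
  ring

/-- Embedding of `(ℝ²)^N` into `ℝ^(N×2)` with square-root weights. -/
noncomputable def hel_emb {N : ℕ} (r : Fin N → ℝ) (X : Fin N → ℝ × ℝ) : Fin N × Fin 2 → ℝ :=
  fun p => Real.sqrt (r p.1) * (if p.2 = 0 then (X p.1).1 else (X p.1).2)

lemma hel_wdot_eq_dot {N : ℕ} (r : Fin N → ℝ) (hr : ∀ i, 0 < r i) (X Y : Fin N → ℝ × ℝ) :
    wdot r X Y = ∑ p : Fin N × Fin 2, hel_emb r X p * hel_emb r Y p := by
  rw [Fintype.sum_prod_type]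
  unfold wdot hel_emb
  refine Finset.sum_congr rfl fun i _ => ?_
  rw [Fin.sum_univ_two]
  simp only [show ((0:Fin 2) = 0) = True by simp, show ((1:Fin 2) = 0) = False by simp,
    if_true, if_false]
  ring_nf
  rw [Real.sq_sqrt (hr i).le]

lemma hel_emb_eq_zero {N : ℕ} (r : Fin N → ℝ) (hr : ∀ i, 0 < r i) (X : Fin N → ℝ × ℝ)
    (h : hel_emb r X = 0) : X = 0 := by
  funext i
  have hs : Real.sqrt (r i) ≠ 0 := by
    have := Real.sqrt_pos.mpr (hr i); linarith
  have h1 := congrFun h (i, 0)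
  have h2 := congrFun h (i, 1)
  simp only [hel_emb, Pi.zero_apply] at h1 h2
  norm_num at h1 h2
  rcases h1 with h1 | h1
  · exact absurd h1 hs
  rcases h2 with h2 | h2
  · exact absurd h2 hs
  exact Prod.ext h1 h2

lemma hel_emb_comb {N : ℕ} (r : Fin N → ℝ) (c d : ℝ) (X Y : Fin N → ℝ × ℝ)
    (p : Fin N × Fin 2) :
    hel_emb r (c • X + d • Y) p = c * hel_emb r X p + d * hel_emb r Y p := by
  unfold hel_emb
  by_cases hp : p.2 = 0 <;>
    simp only [hp, if_true, if_false, Pi.add_apply, Pi.smul_apply, Prod.fst_add, Prod.snd_add,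
      Prod.smul_fst, Prod.smul_snd, smul_eq_mul] <;> ring

lemma hel_det_nonneg_of_posSemidef {n : Type*} [Fintype n] [DecidableEq n]
    {M : Matrix n n ℝ} (hM : M.PosSemidef) : 0 ≤ M.det := by
  rw [hM.1.det_eq_prod_eigenvalues]
  exact Finset.prod_nonneg fun i _ => by simpa using hM.eigenvalues_nonneg i

theorem helfrich_scheme_structure_preservation
    (N : ℕ) (hN : 1 ≤ N) (r : Fin N → ℝ) (hr : ∀ i, 0 < r i)
    (b l a u : Fin N → ℝ × ℝ) (hla : LinearIndependent ℝ ![l, a])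
    (lam mu γ Δt : ℝ) (hΔt : 0 < Δt)
    (D : ℝ)
    (hD : D = (Matrix.det !![wdot r b b, wdot r b l, wdot r b a;
                             wdot r l b, wdot r l l, wdot r l a;
                             wdot r a b, wdot r a l, wdot r a a])
        / (Matrix.det !![wdot r l l, wdot r l a; wdot r a l, wdot r a a]))
    (h1 : wdot r l (-b + lam • l + mu • a + u + γ • b) = 0)
    (h2 : wdot r a (-b + lam • l + mu • a + u + γ • b) = 0)
    (h3 : wdot r b (-b + lam • l + mu • a + u + γ • b) + D = 0)
    (X0 X1 : Fin N → ℝ × ℝ)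
    (hX : X1 - X0 = Δt • (-b + lam • l + mu • a + u + γ • b))
    (L0 L1 A0 A1 B0 B1 : ℝ)
    (hL : L1 - L0 = wdot r l (X1 - X0))
    (hA : A1 - A0 = wdot r a (X1 - X0))
    (hB : B1 - B0 = wdot r b (X1 - X0)) :
    L1 = L0 ∧ A1 = A0 ∧ B1 - B0 = -Δt * D ∧ B1 - B0 ≤ 0 := by
  classical
  set v : Fin N → ℝ × ℝ := -b + lam • l + mu • a + u + γ • b with hv
  -- Gram matrix machinery
  set B3 : Matrix (Fin N × Fin 2) (Fin 3) ℝ :=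
    Matrix.of fun p j => hel_emb r (![b, l, a] j) p with hB3
  set B2 : Matrix (Fin N × Fin 2) (Fin 2) ℝ :=
    Matrix.of fun p j => hel_emb r (![l, a] j) p with hB2
  have gram3 : (!![wdot r b b, wdot r b l, wdot r b a;
                   wdot r l b, wdot r l l, wdot r l a;
                   wdot r a b, wdot r a l, wdot r a a])
      = Matrix.conjTranspose B3 * B3 := by
    ext j j'
    rw [Matrix.mul_apply]
    fin_cases j <;> fin_cases j' <;>
      simp [hB3, Matrix.conjTranspose_apply, hel_wdot_eq_dot r hr, mul_comm]
  have gram2 : (!![wdot r l l, wdot r l a; wdot r a l, wdot r a a])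
      = Matrix.conjTranspose B2 * B2 := by
    ext j j'
    rw [Matrix.mul_apply]
    fin_cases j <;> fin_cases j' <;>
      simp [hB2, Matrix.conjTranspose_apply, hel_wdot_eq_dot r hr, mul_comm]
  -- det of the 3×3 Gram matrix is nonnegative
  have hdet3 : 0 ≤ Matrix.det (!![wdot r b b, wdot r b l, wdot r b a;
                   wdot r l b, wdot r l l, wdot r l a;
                   wdot r a b, wdot r a l, wdot r a a]) := by
    rw [gram3]
    exact hel_det_nonneg_of_posSemidef (Matrix.posSemidef_conjTranspose_mul_self B3)
  -- det of the 2×2 Gram matrix is positive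
  have hli : ∀ g : Fin 2 → ℝ, g 0 • l + g 1 • a = 0 → g = 0 := by
    intro g hg
    have := Fintype.linearIndependent_iff.mp hla g (by
      rw [Fin.sum_univ_two]; simpa using hg)
    funext i; exact this i
  have hB2mv : ∀ x : Fin 2 → ℝ, B2.mulVec x = hel_emb r (x 0 • l + x 1 • a) := by
    intro x
    funext p
    rw [Matrix.mulVec, dotProduct, Fin.sum_univ_two, hel_emb_comb]
    simp [hB2]
    ring
  have hposdef : (!![wdot r l l, wdot r l a; wdot r a l, wdot r a a]).PosDef := by
    rw [gram2]
    refine Matrix.PosDef.of_dotProduct_mulVec_pos (Matrix.isHermitian_conjTranspose_mul_self _) fun x hx => ?_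
    rw [← Matrix.mulVec_mulVec, Matrix.dotProduct_mulVec, Matrix.vecMul_conjTranspose,
      star_star]
    have hy : B2.mulVec x ≠ 0 := by
      rw [hB2mv x]
      intro h
      apply hx
      have h0 := hel_emb_eq_zero r hr _ h
      have hx0 : (fun j : Fin 2 => x j) = 0 := hli (fun j => x j) (by simpa using h0)
      funext j; exact congrFun hx0 j
    have h0 : (0:ℝ) ≤ dotProduct (star (B2.mulVec x)) (B2.mulVec x) := by
      simp only [star_trivial]
      exact Finset.sum_nonneg fun i _ => mul_self_nonneg _
    rcases lt_or_eq_of_le h0 with h | h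
    · exact h
    · exfalso
      apply hy
      have hz : dotProduct (B2.mulVec x) (B2.mulVec x) = 0 := by simpa [star_trivial] using h.symm
      exact dotProduct_self_eq_zero.mp hz
  have hdet2 : 0 < Matrix.det (!![wdot r l l, wdot r l a; wdot r a l, wdot r a a]) :=
    hposdef.det_pos
  have hDnn : 0 ≤ D := hD ▸ div_nonneg hdet3 hdet2.le
  -- conclusions
  have hLv : wdot r l (X1 - X0) = Δt * wdot r l v := by rw [hX, hel_wdot_smul_right]
  have hAv : wdot r a (X1 - X0) = Δt * wdot r a v := by rw [hX, hel_wdot_smul_right]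
  have hBv : wdot r b (X1 - X0) = Δt * wdot r b v := by rw [hX, hel_wdot_smul_right]
  have hbv : wdot r b v = -D := by linarith [h3]
  refine ⟨by rw [hLv, h1, mul_zero] at hL; linarith,
          by rw [hAv, h2, mul_zero] at hA; linarith, ?_, ?_⟩
  · rw [hB, hBv, hbv]; ring
  · rw [hB, hBv, hbv]
    nlinarith
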